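/- Let n_b : ℝ → ℝ and 𝒢_b : ℝ → ℝ be differentiable with 𝒢_b′(z) = ℏ n_b(z) 𝒢_b(z) for all z, let T : ℝ → ℝ be twice differentiable with n_b·(T′∘𝒢_b)·𝒢_b differentiable, and let n* : ℝ³ → ℝ be continuously differentiable. Define 𝒢*(x₁,x₂,x₃) = ℏ (∫₁^{x₃} n*(x₁,x₂,s) ds) 𝒢_b(x₃), the vector fields P_b(x) = T(𝒢_b(x₃)) e₃ and P*(x) = 𝒢*(x) T′(𝒢_b(x₃)) e₃. Then div(n* P_b + n_b P*) = 2 ℏ n_b(x₃) 𝒢_b(x₃) T′(𝒢_b(x₃)) n*(x) + T(𝒢_b(x₃)) ∂n*/∂x₃ + ℏ (d/dx₃)[n_b(x₃) 𝒢_b(x₃) T′(𝒢_b(x₃))] ∫₁^{x₃} n*(x₁,x₂,s) ds. -/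

import Mathlib

/-- Partial derivative in the first coordinate of ℝ³ (realized as ℝ × ℝ × ℝ). -/
noncomputable def pd1 (f : ℝ × ℝ × ℝ → ℝ) (p : ℝ × ℝ × ℝ) : ℝ :=
  deriv (fun t => f (t, p.2.1, p.2.2)) p.1

/-- Partial derivative in the second coordinate. -/
noncomputable def pd2 (f : ℝ × ℝ × ℝ → ℝ) (p : ℝ × ℝ × ℝ) : ℝ :=
  deriv (fun t => f (p.1, t, p.2.2)) p.2.1

/-- Partial derivative in the third coordinate. -/
noncomputable def pd3 (f : ℝ × ℝ × ℝ → ℝ) (p : ℝ × ℝ × ℝ) : ℝ :=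
  deriv (fun t => f (p.1, p.2.1, t)) p.2.2

/-- The divergence of a vector field on ℝ³. -/
noncomputable def div3 (F : ℝ × ℝ × ℝ → ℝ × ℝ × ℝ) (p : ℝ × ℝ × ℝ) : ℝ :=
  pd1 (fun q => (F q).1) p + pd2 (fun q => (F q).2.1) p + pd3 (fun q => (F q).2.2) p

/- STATEMENT 13: with 𝒢_b′ = ℏ n_b 𝒢_b, 𝒢*(x) = ℏ(∫₁^{x₃} n*)𝒢_b(x₃),
P_b = T(𝒢_b(x₃))e₃ and P* = 𝒢* T′(𝒢_b(x₃))e₃, the divergence of n*P_b + n_b P* is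
2ℏ n_b 𝒢_b T′(𝒢_b) n* + T(𝒢_b) ∂₃n* + ℏ (d/dx₃)[n_b 𝒢_b T′(𝒢_b)] ∫₁^{x₃} n*. -/
theorem stmt_13 (ℏ : ℝ) (n_b Gb T : ℝ → ℝ)
    (hnb : Differentiable ℝ n_b) (hGb : Differentiable ℝ Gb)
    (hGb' : ∀ z : ℝ, deriv Gb z = ℏ * n_b z * Gb z)
    (hT : Differentiable ℝ T) (hT' : Differentiable ℝ (deriv T))
    (hprod : Differentiable ℝ (fun z => n_b z * Gb z * deriv T (Gb z)))
    (nstar : ℝ × ℝ × ℝ → ℝ) (hns : ContDiff ℝ 1 nstar) :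
    ∀ p : ℝ × ℝ × ℝ,
      div3 (fun q =>
          nstar q • ((0:ℝ), (0:ℝ), T (Gb q.2.2))
            + n_b q.2.2 •
              ((0:ℝ), (0:ℝ),
                (ℏ * (∫ s in (1:ℝ)..q.2.2, nstar (q.1, q.2.1, s)) * Gb q.2.2)
                  * deriv T (Gb q.2.2))) p
        = 2 * ℏ * n_b p.2.2 * Gb p.2.2 * deriv T (Gb p.2.2) * nstar p
          + T (Gb p.2.2) * pd3 nstar p
          + ℏ * deriv (fun z => n_b z * Gb z * deriv T (Gb z)) p.2.2
            * ∫ s in (1:ℝ)..p.2.2, nstar (p.1, p.2.1, s) := by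

  intro p
  obtain ⟨a, b, c⟩ := p
  have hg : Continuous fun t : ℝ => nstar (a, b, t) :=
    hns.continuous.comp (by continuity)
  set F : ℝ → ℝ := fun t => ∫ s in (1:ℝ)..t, nstar (a, b, s) with hFdef
  have hF : HasDerivAt F (nstar (a, b, c)) c :=
    intervalIntegral.integral_hasDerivAt_right (hg.intervalIntegrable 1 c)
      (hg.stronglyMeasurableAtFilter _ _) hg.continuousAt
  have hn3 : HasDerivAt (fun t => nstar (a, b, t)) (pd3 nstar (a, b, c)) c := by
    have hd : DifferentiableAt ℝ (fun t : ℝ => nstar (a, b, t)) c :=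
      (hns.differentiable one_ne_zero (a, b, c)).comp c
        (differentiableAt_const _|>.prodMk ((differentiableAt_const _).prodMk differentiableAt_id))
    simpa [pd3] using hd.hasDerivAt
  have hGbc : HasDerivAt Gb (ℏ * n_b c * Gb c) c := by
    simpa [hGb' c] using (hGb c).hasDerivAt
  have hTGb : HasDerivAt (fun t => T (Gb t)) (deriv T (Gb c) * (ℏ * n_b c * Gb c)) c :=
    (hT (Gb c)).hasDerivAt.comp c hGbc
  set P : ℝ → ℝ := fun z => n_b z * Gb z * deriv T (Gb z) with hPdef
  have hP : HasDerivAt P (deriv P c) c := (hprod c).hasDerivAt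
  have key : HasDerivAt
      (fun t => nstar (a, b, t) * T (Gb t)
        + n_b t * ((ℏ * F t * Gb t) * deriv T (Gb t)))
      (pd3 nstar (a, b, c) * T (Gb c)
        + nstar (a, b, c) * (deriv T (Gb c) * (ℏ * n_b c * Gb c))
        + ℏ * (nstar (a, b, c) * P c + F c * deriv P c)) c := by
    have h2 : HasDerivAt (fun t => ℏ * (F t * P t))
        (ℏ * (nstar (a, b, c) * P c + F c * deriv P c)) c :=
      (hF.mul hP).const_mul ℏ
    have := (hn3.mul hTGb).add h2
    refine this.congr_of_eventuallyEq (Filter.Eventually.of_forall fun t => ?_)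
    simp only [hPdef, Pi.add_apply, Pi.mul_apply]
    ring
  have h3 : deriv (fun t => nstar (a, b, t) * T (Gb t)
        + n_b t * ((ℏ * F t * Gb t) * deriv T (Gb t))) c
      = pd3 nstar (a, b, c) * T (Gb c)
        + nstar (a, b, c) * (deriv T (Gb c) * (ℏ * n_b c * Gb c))
        + ℏ * (nstar (a, b, c) * P c + F c * deriv P c) := key.deriv
  simp only [div3, pd1, pd2, pd3, Prod.fst_add, Prod.snd_add, Prod.smul_mk,
    smul_eq_mul, mul_zero, add_zero, zero_add, deriv_const] at h3 ⊢
  rw [h3]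
  simp only [hPdef, hFdef]
  ring
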